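/- Let f ∈ L²(ℝ) have analytic part f₊ (f̂₊ = 2f̂·1_{ω>0}), let p > 0, and define F(z) = (1/2π) ∫_ℝ ω^p f̂₊(ω) e^{iωz} dω for Im z > 0. Let ψ_j be the Cauchy wavelet with ψ̂_j(ω) = (a^j ω)^p e^{-a^j ω} 1_{ω>0}, a > 1. Then F is holomorphic on the upper half-plane and for every j ∈ ℤ and x ∈ ℝ, (a^{pj}/2) F(x + i a^j) = (f ⋆ ψ_j)(x). -/

import Mathlib

open MeasureTheory Complex Real

noncomputable section

/-- Fourier transform with the convention `f̂(ω) = ∫ f(x) e^{-iωx} dx`. -/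
def fourierT (f : ℝ → ℂ) (ω : ℝ) : ℂ :=
  ∫ x : ℝ, f x * Complex.exp (-Complex.I * ω * x)

/-- Convolution of two functions on `ℝ`. -/
def conv (f g : ℝ → ℂ) (x : ℝ) : ℂ := ∫ t : ℝ, f t * g (x - t)

/-- The holomorphic extension `F(z) = (1/2π) ∫_0^∞ ω^p f̂₊(ω) e^{iωz} dω`, where
`f̂₊(ω) = 2 f̂(ω)` for `ω > 0`. -/
def Fext (p : ℝ) (f : ℝ → ℂ) (z : ℂ) : ℂ :=
  (1 / (2 * (π : ℂ))) * ∫ ω in Set.Ioi (0 : ℝ),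
    ((ω ^ p : ℝ) : ℂ) * (2 * fourierT f ω) * Complex.exp (Complex.I * ω * z)

/-- The Cauchy wavelet `ψ_j` with `ψ̂_j(ω) = (a^j ω)^p e^{-a^j ω} 1_{ω>0}`, obtained by
inverse Fourier transform. -/
def cauchyWavelet (a p : ℝ) (j : ℤ) (x : ℝ) : ℂ :=
  (1 / (2 * (π : ℂ))) * ∫ ω in Set.Ioi (0 : ℝ),
    (((a ^ j * ω) ^ p : ℝ) : ℂ) * (Real.exp (-(a ^ j * ω)) : ℂ) *
      Complex.exp (Complex.I * ω * x)


lemma int_aux {s b : ℝ} (hs : -1 < s) (hb : 0 < b) :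
    IntegrableOn (fun ω : ℝ => ω ^ s * Real.exp (-(b * ω))) (Set.Ioi 0) := by
  have := integrableOn_rpow_mul_exp_neg_mul_rpow hs zero_lt_one hb
  simpa [Real.rpow_one, neg_mul] using this

lemma norm_exp_I_mul (ω : ℝ) (z : ℂ) :
    ‖Complex.exp (Complex.I * ω * z)‖ = Real.exp (-(ω * z.im)) := by
  rw [Complex.norm_exp]
  congr 1
  simp [Complex.mul_re, Complex.mul_im]

lemma fourierT_norm_le (f : ℝ → ℂ) (ω : ℝ) :
    ‖fourierT f ω‖ ≤ ∫ x : ℝ, ‖f x‖ := by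
  refine (norm_integral_le_integral_norm _).trans_eq ?_
  congr 1; funext x
  rw [norm_mul, Complex.norm_exp]
  have : (-Complex.I * ↑ω * ↑x).re = 0 := by simp
  rw [this, Real.exp_zero, mul_one]

lemma fourierT_continuous {f : ℝ → ℂ} (hf : Integrable f) :
    Continuous (fourierT f) := by
  apply MeasureTheory.continuous_of_dominated (bound := fun x => ‖f x‖)
  · intro ω
    exact hf.1.mul ((Complex.continuous_exp.comp (by continuity)).aestronglyMeasurable)
  · intro ω
    filter_upwards with x
    rw [norm_mul, Complex.norm_exp]
    have : (-Complex.I * ↑ω * ↑x).re = 0 := by simp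
    rw [this, Real.exp_zero, mul_one]
  · exact hf.norm
  · filter_upwards with x
    exact continuous_const.mul (Complex.continuous_exp.comp (by continuity))

lemma rpow_cont {p : ℝ} (hp : 0 < p) : Continuous (fun ω : ℝ => ω ^ p) := by
  rw [continuous_iff_continuousAt]
  exact fun x => Real.continuousAt_rpow_const x p (Or.inr hp.le)

lemma Fcont {p : ℝ} (hp : 0 < p) {f : ℝ → ℂ} (hf : Integrable f) (z : ℂ) :
    Continuous (fun ω : ℝ =>
      ((ω ^ p : ℝ) : ℂ) * (2 * fourierT f ω) * Complex.exp (Complex.I * ω * z)) := by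
  apply Continuous.mul
  · exact (Complex.continuous_ofReal.comp (rpow_cont hp)).mul
      (continuous_const.mul (fourierT_continuous hf))
  · exact Complex.continuous_exp.comp (by continuity)

lemma Fbound {p : ℝ} (hp : 0 < p) (f : ℝ → ℂ) {ω : ℝ} (hω : 0 < ω) (z : ℂ) :
    ‖((ω ^ p : ℝ) : ℂ) * (2 * fourierT f ω) * Complex.exp (Complex.I * ω * z)‖
      ≤ (2 * ∫ x : ℝ, ‖f x‖) * (ω ^ p * Real.exp (-(z.im * ω))) := by
  rw [norm_mul, norm_mul, norm_mul, norm_exp_I_mul]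
  have h1 : ‖((ω ^ p : ℝ) : ℂ)‖ = ω ^ p := by
    rw [Complex.norm_real, Real.norm_eq_abs, _root_.abs_of_nonneg (Real.rpow_nonneg hω.le p)]
  have h2 : ‖(2 : ℂ)‖ = 2 := by norm_num
  rw [h1, h2, mul_comm z.im ω]
  have := fourierT_norm_le f ω
  calc ω ^ p * (2 * ‖fourierT f ω‖) * Real.exp (-(ω * z.im))
      ≤ ω ^ p * (2 * ∫ x : ℝ, ‖f x‖) * Real.exp (-(ω * z.im)) := by
        gcongr
    _ = (2 * ∫ x : ℝ, ‖f x‖) * (ω ^ p * Real.exp (-(ω * z.im))) := by ring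

lemma Fint {p : ℝ} (hp : 0 < p) {f : ℝ → ℂ} (hf : Integrable f) {z : ℂ} (hz : 0 < z.im) :
    IntegrableOn (fun ω : ℝ =>
      ((ω ^ p : ℝ) : ℂ) * (2 * fourierT f ω) * Complex.exp (Complex.I * ω * z))
      (Set.Ioi 0) := by
  refine ((int_aux (by linarith : (-1:ℝ) < p) hz).const_mul
      (2 * ∫ x : ℝ, ‖f x‖)).mono' ((Fcont hp hf z).aestronglyMeasurable.restrict) ?_
  rw [ae_restrict_iff' measurableSet_Ioi]
  filter_upwards with ω hω
  exact Fbound hp f hω z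

lemma Fdiff {p : ℝ} (hp : 0 < p) {f : ℝ → ℂ} (hf : Integrable f) :
    DifferentiableOn ℂ (Fext p f) {z : ℂ | 0 < z.im} := by
  intro z₀ hz₀
  have hz₀' : 0 < z₀.im := hz₀
  set ε : ℝ := z₀.im / 2 with hεdef
  have hε : 0 < ε := by positivity
  have hball : ∀ z ∈ Metric.ball z₀ ε, ε ≤ z.im := by
    intro z hz
    have h1 : |(z - z₀).im| ≤ ‖z - z₀‖ := Complex.abs_im_le_norm _
    have h2 : ‖z - z₀‖ < ε := by
      rw [← Complex.dist_eq]; exact Metric.mem_ball.mp hz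
    rw [Complex.sub_im] at h1
    have := abs_lt.mp (lt_of_le_of_lt h1 h2)
    simp only [hεdef] at *
    linarith [this.1]
  have hF'm : AEStronglyMeasurable (fun ω : ℝ => (Complex.I * ω) *
      (((ω ^ p : ℝ) : ℂ) * (2 * fourierT f ω) * Complex.exp (Complex.I * ω * z₀)))
      (volume.restrict (Set.Ioi (0:ℝ))) := by
    exact ((continuous_const.mul Complex.continuous_ofReal).mul
      (Fcont hp hf z₀)).aestronglyMeasurable.restrict
  have key := hasDerivAt_integral_of_dominated_loc_of_deriv_le
    (μ := volume.restrict (Set.Ioi (0:ℝ))) (x₀ := z₀)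
    (F := fun z ω => ((ω ^ p : ℝ) : ℂ) * (2 * fourierT f ω) * Complex.exp (Complex.I * ω * z))
    (F' := fun z ω => (Complex.I * ω) *
      (((ω ^ p : ℝ) : ℂ) * (2 * fourierT f ω) * Complex.exp (Complex.I * ω * z)))
    (bound := fun ω => (2 * ∫ x : ℝ, ‖f x‖) * (ω ^ (p+1) * Real.exp (-(ε * ω)))) (Metric.ball_mem_nhds z₀ hε)
    (Filter.Eventually.of_forall fun z => (Fcont hp hf z).aestronglyMeasurable.restrict)
    (Fint hp hf hz₀')
    hF'm ?_ ?_ ?_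
  · obtain ⟨-, hderiv⟩ := key
    exact (hderiv.differentiableAt.const_mul (1 / (2 * (π : ℂ)))).differentiableWithinAt
  · rw [ae_restrict_iff' measurableSet_Ioi]
    filter_upwards with ω hω
    intro z hz
    rw [norm_mul]
    have hI : ‖Complex.I * (ω:ℂ)‖ = ω := by
      rw [norm_mul, Complex.norm_I, one_mul, Complex.norm_real, Real.norm_eq_abs,
        _root_.abs_of_nonneg hω.le]
    rw [hI]
    have hfn : (0:ℝ) ≤ 2 * ∫ x : ℝ, ‖f x‖ :=
      mul_nonneg (by norm_num) (integral_nonneg fun _ => norm_nonneg _)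
    calc ω * ‖((ω ^ p : ℝ) : ℂ) * (2 * fourierT f ω) * Complex.exp (Complex.I * ω * z)‖
        ≤ ω * ((2 * ∫ x : ℝ, ‖f x‖) * (ω ^ p * Real.exp (-(z.im * ω)))) :=
          mul_le_mul_of_nonneg_left (Fbound hp f hω z) hω.le
      _ ≤ ω * ((2 * ∫ x : ℝ, ‖f x‖) * (ω ^ p * Real.exp (-(ε * ω)))) := by
          refine mul_le_mul_of_nonneg_left (mul_le_mul_of_nonneg_left
            (mul_le_mul_of_nonneg_left ?_ (Real.rpow_nonneg hω.le p)) hfn) hω.le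
          exact Real.exp_le_exp.mpr (by nlinarith [hball z hz, Set.mem_Ioi.mp hω])
      _ = (2 * ∫ x : ℝ, ‖f x‖) * (ω ^ (p+1) * Real.exp (-(ε * ω))) := by
          rw [Real.rpow_add_one hω.ne']
          ring
  · exact (int_aux (by linarith : (-1:ℝ) < p + 1) hε).const_mul _
  · rw [ae_restrict_iff' measurableSet_Ioi]
    filter_upwards with ω hω
    intro z hz
    have h1 : HasDerivAt (fun z : ℂ => Complex.exp (Complex.I * ω * z))
        (Complex.exp (Complex.I * ω * z) * (Complex.I * ω * 1)) z :=
      ((hasDerivAt_id z).const_mul (Complex.I * (ω:ℂ))).cexp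
    have h2 := h1.const_mul (((ω ^ p : ℝ) : ℂ) * (2 * fourierT f ω))
    refine h2.congr_deriv ?_
    ring

lemma identity {p a : ℝ} (hp : 0 < p) (ha : 1 < a) {f : ℝ → ℂ} (hf1 : Integrable f)
    (j : ℤ) (x : ℝ) :
    ((((a ^ j) ^ p : ℝ) : ℂ) / 2) * Fext p f ((x : ℂ) + (a ^ j : ℝ) * Complex.I) =
      conv f (cauchyWavelet a p j) x := by
  set c : ℝ := a ^ j with hcdef
  have hc : 0 < c := zpow_pos (lt_trans zero_lt_one ha) j
  set G : ℝ → ℂ := fun ω => (((c * ω) ^ p * Real.exp (-(c * ω)) : ℝ) : ℂ) with hGdef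
  -- continuity of G
  have hGcont : Continuous G := by
    apply Complex.continuous_ofReal.comp
    exact ((rpow_cont hp).comp (continuous_const.mul continuous_id)).mul
      (Real.continuous_exp.comp (continuous_const.mul continuous_id).neg)
  -- integrability of G on Ioi 0
  have hGr : IntegrableOn (fun ω : ℝ => (c * ω) ^ p * Real.exp (-(c * ω))) (Set.Ioi 0) := by
    refine ((int_aux (by linarith : (-1:ℝ) < p) hc).const_mul (c ^ p)).congr ?_
    rw [Filter.EventuallyEq, ae_restrict_iff' measurableSet_Ioi]
    filter_upwards with ω hω
    rw [Real.mul_rpow hc.le (le_of_lt hω)]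
    ring
  have hG : Integrable G (volume.restrict (Set.Ioi 0)) := hGr.ofReal
  -- the double-integral function
  set H : ℝ → ℝ → ℂ := fun ω t => G ω * f t * Complex.exp (Complex.I * ω * ((x - t : ℝ) : ℂ))
    with hHdef
  have hH : Integrable (fun z : ℝ × ℝ => H z.1 z.2)
      ((volume.restrict (Set.Ioi 0)).prod volume) := by
    refine Integrable.mono' (hG.mul_prod hf1).norm ?_ ?_
    · have hsnd : AEStronglyMeasurable (fun z : ℝ × ℝ => f z.2)
          ((volume.restrict (Set.Ioi 0)).prod volume) := AEStronglyMeasurable.comp_snd (μ := volume.restrict (Set.Ioi 0)) hf1.1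
      exact ((hGcont.comp continuous_fst).aestronglyMeasurable.mul hsnd).mul
        (Complex.continuous_exp.comp (by continuity)).aestronglyMeasurable
    · filter_upwards with z
      rw [norm_mul, norm_exp_I_mul]
      simp [norm_mul]
  have hswap := integral_integral_swap (f := H) hH
  -- key exponential splitting
  have hexp1 : ∀ ω : ℝ, Complex.exp (Complex.I * ω * ((x : ℂ) + (c : ℝ) * Complex.I)) =
      Complex.exp (Complex.I * ω * x) * ((Real.exp (-(c * ω)) : ℝ) : ℂ) := by
    intro ω
    rw [Complex.ofReal_exp, ← Complex.exp_add]
    congr 1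
    push_cast
    linear_combination (↑c * ↑ω : ℂ) * Complex.I_sq
  -- step 1 : rewrite the ω-integrand as an inner integral over t
  have step1 : (∫ ω in Set.Ioi (0:ℝ), (((c ^ p : ℝ) : ℂ)/2) *
        (((ω ^ p : ℝ) : ℂ) * (2 * fourierT f ω) *
          Complex.exp (Complex.I * ω * ((x : ℂ) + (c : ℝ) * Complex.I))))
      = ∫ ω in Set.Ioi (0:ℝ), ∫ t : ℝ, H ω t := by
    apply setIntegral_congr_fun measurableSet_Ioi
    intro ω hω
    dsimp only
    have hinner : (∫ t : ℝ, H ω t) =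
        G ω * fourierT f ω * Complex.exp (Complex.I * ω * x) := by
      have heq : ∀ t : ℝ, H ω t =
          G ω * (f t * Complex.exp (-Complex.I * ω * t)) *
            Complex.exp (Complex.I * ω * x) := by
        intro t
        have hsplit : Complex.exp (Complex.I * ω * ((x - t : ℝ) : ℂ)) =
            Complex.exp (-Complex.I * ω * t) * Complex.exp (Complex.I * ω * x) := by
          rw [← Complex.exp_add]
          congr 1
          push_cast
          ring
        simp only [hHdef, hsplit]
        ring
      simp_rw [heq]
      rw [integral_mul_const, integral_const_mul]
      rfl
    rw [hinner, hexp1 ω]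
    have hpow : (c * ω) ^ p = c ^ p * ω ^ p := Real.mul_rpow hc.le (le_of_lt hω)
    simp only [hGdef]
    push_cast [hpow]
    ring
  -- step 2 : inner ω-integral for fixed t
  have step2 : ∀ t : ℝ, (∫ ω in Set.Ioi (0:ℝ), H ω t) =
      f t * ∫ ω in Set.Ioi (0:ℝ), G ω * Complex.exp (Complex.I * ω * ((x - t : ℝ) : ℂ)) := by
    intro t
    rw [← integral_const_mul]
    congr 1; funext ω
    simp only [hHdef]
    ring
  calc (((c ^ p : ℝ) : ℂ) / 2) * Fext p f ((x : ℂ) + (c : ℝ) * Complex.I)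
      = (1/(2*(π:ℂ))) * ∫ ω in Set.Ioi (0:ℝ), (((c ^ p : ℝ) : ℂ)/2) *
          (((ω ^ p : ℝ) : ℂ) * (2 * fourierT f ω) *
            Complex.exp (Complex.I * ω * ((x : ℂ) + (c : ℝ) * Complex.I))) := by
        simp only [Fext]
        rw [integral_const_mul]
        ring
    _ = (1/(2*(π:ℂ))) * ∫ ω in Set.Ioi (0:ℝ), ∫ t : ℝ, H ω t := by rw [step1]
    _ = (1/(2*(π:ℂ))) * ∫ t : ℝ, ∫ ω in Set.Ioi (0:ℝ), H ω t := by rw [hswap]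
    _ = ∫ t : ℝ, f t * ((1/(2*(π:ℂ))) *
          ∫ ω in Set.Ioi (0:ℝ), G ω * Complex.exp (Complex.I * ω * ((x - t : ℝ) : ℂ))) := by
        rw [← integral_const_mul]
        congr 1; funext t
        rw [step2 t]
        ring
    _ = conv f (cauchyWavelet a p j) x := by
        have hwav : ∀ t : ℝ, cauchyWavelet a p j (x - t) = (1/(2*(π:ℂ))) *
            ∫ ω in Set.Ioi (0:ℝ), G ω * Complex.exp (Complex.I * ω * ((x - t : ℝ) : ℂ)) := by
          intro t
          simp only [cauchyWavelet, ← hcdef, hGdef]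
          congr 1
          congr 1
          funext ω
          push_cast
          ring
        rw [conv]
        congr 1; funext t
        rw [hwav t]

/-- **The Cauchy wavelet transform is a holomorphic function sampled on horizontal
lines**: `F` is holomorphic on the upper half-plane and
`(a^{pj}/2) F(x + i a^j) = (f ⋆ ψ_j)(x)` for all `j ∈ ℤ`, `x ∈ ℝ`. -/
theorem stmt16 (p a : ℝ) (hp : 0 < p) (ha : 1 < a) (f : ℝ → ℂ)
    (hf1 : Integrable f) (hf2 : MemLp f 2 (volume : Measure ℝ)) :
    DifferentiableOn ℂ (Fext p f) {z : ℂ | 0 < z.im} ∧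
    ∀ (j : ℤ) (x : ℝ),
      ((((a ^ j) ^ p : ℝ) : ℂ) / 2) * Fext p f ((x : ℂ) + (a ^ j : ℝ) * Complex.I) =
        conv f (cauchyWavelet a p j) x :=
  ⟨Fdiff hp hf1, fun j x => identity hp ha hf1 j x⟩
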